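/- Fix a strictly balanced graph H with v vertices and m edges, fix x₀ ∈ [n], and let f = Σ_U t_U where U runs over edge sets of copies of H in K_n containing x₀ and t_e are i.i.d. Bernoulli(p) edge indicators. Then E f = Θ(n^{v−1} p^m), and for any nonempty L ⊆ E(K_n) with |L| = m' < m edges spanning v' vertices (together with x₀, if L covers x₀ then v' includes x₀) such that (V(L)∪{x₀}, L) is a subgraph of some copy of H through x₀, one has E f / E_L f = Ω(n^{v'−1} p^{m'}); in particular if p = Ω(n^{−(v−1)/m}) then E f / E_L f ≥ n^{Ω(1)}. -/

import Mathlib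

open SimpleGraph

noncomputable def subgraphDensity {V : Type*} {H : SimpleGraph V} (H' : H.Subgraph) : ℝ :=
  (H'.edgeSet.ncard : ℝ) / ((H'.verts.ncard : ℝ) - 1)

noncomputable def graphDensity {V : Type*} [Fintype V] (H : SimpleGraph V) : ℝ :=
  (H.edgeSet.ncard : ℝ) / ((Fintype.card V : ℝ) - 1)

def StrictlyBalanced {V : Type*} [Fintype V] (H : SimpleGraph V) : Prop :=
  ∀ H' : H.Subgraph, H' ≠ ⊤ → 2 ≤ H'.verts.ncard → subgraphDensity H' < graphDensity H

/-- The edge sets of (unlabeled) copies of `H` in `K_n` whose vertex set contains `x₀`. -/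
def copyEdgeSets (v n : ℕ) (H : SimpleGraph (Fin v)) [DecidableRel H.Adj]
    (x₀ : Fin n) : Set (Finset (Sym2 (Fin n))) :=
  {U | ∃ φ : Fin v ↪ Fin n, (∃ a : Fin v, φ a = x₀) ∧
    U = H.edgeFinset.image (fun e => e.map φ)}

/-- The set of vertices spanned by the edges in `L`, together with `x₀`. -/
def vertSpan {n : ℕ} (L : Finset (Sym2 (Fin n))) (x₀ : Fin n) : Set (Fin n) :=
  {x | x = x₀ ∨ ∃ e ∈ L, x ∈ e}

/-- `E f` for `f = Σ_U t_U`, `U` over edge sets of copies of `H` through `x₀`. -/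
noncomputable def Ef (v n : ℕ) (H : SimpleGraph (Fin v)) [DecidableRel H.Adj]
    (x₀ : Fin n) (m : ℕ) (p : ℝ) : ℝ :=
  ((copyEdgeSets v n H x₀).ncard : ℝ) * p ^ m

/-- `E_L f`, the expectation of the partial derivative of `f` with respect to `L`. -/
noncomputable def ELf (v n : ℕ) (H : SimpleGraph (Fin v)) [DecidableRel H.Adj]
    (x₀ : Fin n) (m : ℕ) (p : ℝ) (L : Finset (Sym2 (Fin n))) : ℝ :=
  ({U ∈ copyEdgeSets v n H x₀ | L ⊆ U}.ncard : ℝ) * p ^ (m - L.card)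

/-! ### Auxiliary lemmas -/

section Helpers

variable {α β : Type*} [Fintype α] [Fintype β] [DecidableEq α] [DecidableEq β]

def eqOnEquiv (K : Finset α) (c : α → β) :
    {f : α → β // ∀ a ∈ K, f a = c a} ≃ ((Kᶜ : Finset α) → β) where
  toFun f b := f.1 b.1
  invFun g := ⟨fun a => if h : a ∈ K then c a else g ⟨a, Finset.mem_compl.mpr h⟩,
    fun a ha => dif_pos ha⟩
  left_inv f := by
    ext a
    by_cases h : a ∈ K
    · simp [h, f.2 a h]
    · simp [h]
  right_inv g := by
    ext b
    have : b.1 ∉ K := Finset.mem_compl.mp b.2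
    simp [this]

lemma card_eqOn (K : Finset α) (c : α → β) :
    Fintype.card {f : α → β // ∀ a ∈ K, f a = c a}
      = Fintype.card β ^ (Fintype.card α - K.card) := by
  rw [Fintype.card_congr (eqOnEquiv K c)]
  simp [Finset.card_compl]

end Helpers

lemma edge_ncard_eq {v : ℕ} (H : SimpleGraph (Fin v)) [DecidableRel H.Adj] :
    H.edgeSet.ncard = H.edgeFinset.card := by
  rw [Set.ncard_eq_toFinset_card']
  exact congrArg Finset.card (Set.toFinset_congr rfl)

lemma no_isolated {v : ℕ} (hv : 2 ≤ v) (H : SimpleGraph (Fin v)) [DecidableRel H.Adj]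
    (hbal : StrictlyBalanced H) (hm1 : 1 ≤ H.edgeFinset.card) (a : Fin v) :
    ∃ b, H.Adj a b := by
  by_contra h
  push_neg at h
  obtain ⟨e, he⟩ := Finset.card_pos.mp hm1
  revert he
  induction e using Sym2.ind with
  | _ c d =>
  intro he
  have hcd : H.Adj c d := by simpa [SimpleGraph.mem_edgeFinset] using he
  have hcd' : c ≠ d := hcd.ne
  have hac : a ≠ c := fun h' => (h d (h' ▸ hcd))
  have had : a ≠ d := fun h' => (h c (h' ▸ hcd.symm))
  have hv3 : 3 ≤ v := by
    have hsub := Finset.card_le_card (Finset.subset_univ ({a, c, d} : Finset (Fin v)))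
    rw [Finset.card_univ, Fintype.card_fin] at hsub
    have : ({a, c, d} : Finset (Fin v)).card = 3 := by
      rw [Finset.card_insert_of_notMem (by simp [hac, had]),
        Finset.card_insert_of_notMem (by simp [hcd']), Finset.card_singleton]
    omega
  set H' : H.Subgraph :=
    { verts := {x | x ≠ a}
      Adj := H.Adj
      adj_sub := fun hxy => hxy
      edge_vert := fun {x y} hxy => fun hxa => h y (hxa ▸ hxy)
      symm := ⟨fun x y hxy => hxy.symm⟩ } with hH'
  have hne : H' ≠ ⊤ := by
    intro ht
    have : a ∈ H'.verts := by rw [ht]; trivial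
    exact this rfl
  have hverts : H'.verts.ncard = v - 1 := by
    have : H'.verts = ({a}ᶜ : Set (Fin v)) := rfl
    rw [this, Set.ncard_eq_toFinset_card', Set.toFinset_compl, Set.toFinset_singleton,
      Finset.card_compl, Fintype.card_fin, Finset.card_singleton]
  have hedges : H'.edgeSet = H.edgeSet := by
    ext e
    induction e using Sym2.ind with
    | _ x y => simp [SimpleGraph.Subgraph.mem_edgeSet, SimpleGraph.mem_edgeSet, hH']
  have hlt := hbal H' hne (by rw [hverts]; omega)
  unfold subgraphDensity graphDensity at hlt
  rw [hedges, hverts] at hlt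
  rw [edge_ncard_eq] at hlt
  set M := H.edgeFinset.card with hM
  have h1 : (0:ℝ) < (v:ℝ) - 1 := by
    have : (3:ℝ) ≤ (v:ℝ) := by exact_mod_cast hv3
    linarith
  have h2 : (0:ℝ) < ((v - 1 : ℕ):ℝ) - 1 := by
    have hc : ((v - 1 : ℕ):ℝ) = (v:ℝ) - 1 := by
      push_cast [Nat.cast_sub (by omega : 1 ≤ v)]; ring
    rw [hc]
    have : (3:ℝ) ≤ (v:ℝ) := by exact_mod_cast hv3
    linarith
  rw [Fintype.card_fin] at hlt
  have hM1 : (1:ℝ) ≤ (M:ℝ) := by exact_mod_cast hm1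
  have hmul := (div_lt_div_iff₀ h2 h1).mp hlt
  have hcast : ((v - 1 : ℕ):ℝ) = (v:ℝ) - 1 := by
    push_cast [Nat.cast_sub (by omega : 1 ≤ v)]; ring
  rw [hcast] at hmul
  nlinarith

section Counting

variable {v n : ℕ} (H : SimpleGraph (Fin v)) [DecidableRel H.Adj] (x₀ : Fin n)

def phiMap (φ : Fin v ↪ Fin n) : Finset (Sym2 (Fin n)) :=
  H.edgeFinset.image (fun e => e.map φ)

noncomputable def copiesFinset : Finset (Finset (Sym2 (Fin n))) :=
  ((Finset.univ : Finset (Fin v ↪ Fin n)).filter fun φ => ∃ a, φ a = x₀).image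
    (phiMap H)

lemma copies_eq : copyEdgeSets v n H x₀ = ↑(copiesFinset H x₀) := by
  ext U
  simp only [copyEdgeSets, Set.mem_setOf_eq, copiesFinset, Finset.coe_image, Set.mem_image,
    Finset.mem_coe, Finset.mem_filter, Finset.mem_univ, true_and, phiMap]
  constructor
  · rintro ⟨φ, hx, rfl⟩; exact ⟨φ, hx, rfl⟩
  · rintro ⟨φ, hx, rfl⟩; exact ⟨φ, hx, rfl⟩

lemma ncard_copies : (copyEdgeSets v n H x₀).ncard = (copiesFinset H x₀).card := by
  rw [copies_eq, Set.ncard_coe_finset]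

lemma copies_card_le : (copiesFinset H x₀).card ≤ v * n ^ (v - 1) := by
  classical
  refine (Finset.card_image_le).trans ?_
  have hsub : ((Finset.univ : Finset (Fin v ↪ Fin n)).filter fun φ => ∃ a, φ a = x₀)
      ⊆ Finset.univ.biUnion
        (fun a : Fin v => Finset.univ.filter fun φ : Fin v ↪ Fin n => φ a = x₀) := by
    intro φ hφ
    simp only [Finset.mem_filter, Finset.mem_univ, true_and] at hφ
    obtain ⟨a, ha⟩ := hφ
    simp only [Finset.mem_biUnion, Finset.mem_univ, true_and, Finset.mem_filter]
    exact ⟨a, ha⟩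
  refine (Finset.card_le_card hsub).trans ((Finset.card_biUnion_le).trans ?_)
  have hb : ∀ a : Fin v,
      ((Finset.univ : Finset (Fin v ↪ Fin n)).filter fun φ => φ a = x₀).card ≤ n ^ (v - 1) := by
    intro a
    rw [← Fintype.card_subtype]
    have hinj : Function.Injective
        (fun φ : {φ : Fin v ↪ Fin n // φ a = x₀} =>
          (⟨⇑φ.1, fun b hb => by rw [Finset.mem_singleton.mp hb]; exact φ.2⟩ :
            {f : Fin v → Fin n // ∀ b ∈ ({a} : Finset (Fin v)), f b = (fun _ => x₀) b})) := by
      intro φ ψ h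
      exact Subtype.ext (DFunLike.coe_injective (congrArg Subtype.val h))
    refine (Fintype.card_le_of_injective _ hinj).trans (le_of_eq ?_)
    have := card_eqOn ({a} : Finset (Fin v)) (fun _ => x₀)
    simpa using this
  calc ∑ a : Fin v, ((Finset.univ : Finset (Fin v ↪ Fin n)).filter fun φ => φ a = x₀).card
      ≤ ∑ _a : Fin v, n ^ (v - 1) := Finset.sum_le_sum (fun a _ => hb a)
    _ = v * n ^ (v - 1) := by simp [mul_comm]

lemma range_sub (hiso : ∀ a : Fin v, ∃ b, H.Adj a b) {ψ φ : Fin v ↪ Fin n}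
    (h : phiMap H ψ ⊆ phiMap H φ) : Set.range ⇑ψ ⊆ Set.range ⇑φ := by
  rintro x ⟨a, rfl⟩
  obtain ⟨b, hab⟩ := hiso a
  have hmem : (s(a, b) : Sym2 (Fin v)).map ⇑ψ ∈ phiMap H ψ :=
    Finset.mem_image_of_mem _ (by simp [SimpleGraph.mem_edgeFinset, hab])
  have h2 := h hmem
  simp only [phiMap, Finset.mem_image] at h2
  obtain ⟨e, he, hee⟩ := h2
  revert hee
  induction e using Sym2.ind with
  | _ c d =>
  intro hee
  rw [Sym2.map_pair_eq, Sym2.map_pair_eq, Sym2.eq_iff] at hee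
  rcases hee with ⟨h1, _⟩ | ⟨_, h1⟩
  · exact ⟨c, h1⟩
  · exact ⟨d, h1⟩

lemma copies_card_ge (hv : 2 ≤ v) (hn : v ≤ n)
    (hiso : ∀ a : Fin v, ∃ b, H.Adj a b) :
    (n + 1 - v) ^ (v - 1) ≤ v ^ v * (copiesFinset H x₀).card := by
  classical
  have hv1 : 1 ≤ v := by omega
  haveI : Nonempty (Fin v) := ⟨⟨0, by omega⟩⟩
  set e0 : Fin v := ⟨0, by omega⟩ with he0
  set s : Finset (Fin v ↪ Fin n) := Finset.univ.filter (fun φ => φ e0 = x₀) with hs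
  have hcard_s : (n + 1 - v) ^ (v - 1) ≤ s.card := by
    rw [hs, ← Fintype.card_subtype]
    have hext : ∀ ψ : Fin (v-1) ↪ {y : Fin n // y ≠ x₀}, Function.Injective
        (fun a : Fin v => if h : a.val = 0 then x₀ else
          (ψ ⟨a.val - 1, by have := a.isLt; omega⟩).1) := by
      intro ψ a b hab
      by_cases ha : a.val = 0 <;> by_cases hb : b.val = 0 <;>
        simp only [ha, hb, dif_pos, dif_neg, not_false_iff] at hab
      · exact Fin.ext (by omega)
      · exact absurd hab.symm (ψ _).2
      · exact absurd hab (ψ _).2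
      · have := ψ.injective (Subtype.ext hab)
        have := congrArg Fin.val this
        simp only at this
        exact Fin.ext (by omega)
    have hFinj : Function.Injective
        (fun ψ : Fin (v-1) ↪ {y : Fin n // y ≠ x₀} =>
          (⟨⟨_, hext ψ⟩, by simp [he0]⟩ : {φ : Fin v ↪ Fin n // φ e0 = x₀})) := by
      intro ψ₁ ψ₂ h
      have h' := congrArg (fun z : {φ : Fin v ↪ Fin n // φ e0 = x₀} => ⇑z.1) h
      simp only [Function.Embedding.coeFn_mk] at h'
      refine DFunLike.ext _ _ (fun i => Subtype.ext ?_)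
      have hi : i.val + 1 < v := by have := i.isLt; omega
      have h2 := congrFun h' ⟨i.val + 1, hi⟩
      simpa using h2
    refine le_trans ?_ (Fintype.card_le_of_injective _ hFinj)
    rw [Fintype.card_embedding_eq]
    have hcs : Fintype.card {y : Fin n // y ≠ x₀} = n - 1 := by
      simp [Fintype.card_subtype_compl]
    rw [hcs, Fintype.card_fin]
    have hd := Nat.pow_sub_le_descFactorial (n-1) (v-1)
    have he : n - 1 + 1 - (v - 1) = n + 1 - v := by omega
    rwa [he] at hd
  have hfib : ∀ U ∈ s.image (phiMap H), (s.filter fun φ => phiMap H φ = U).card ≤ v ^ v := by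
    intro U hU
    obtain ⟨φ₀, hφ₀s, hφ₀⟩ := Finset.mem_image.mp hU
    have hcard : (s.filter fun φ => phiMap H φ = U).card
        ≤ (Finset.univ : Finset (Fin v → Fin v)).card := by
      refine Finset.card_le_card_of_injOn (fun ψ a => Function.invFun ⇑φ₀ (ψ a))
        (fun _ _ => Finset.mem_univ _) ?_
      intro ψ₁ h1 ψ₂ h2 heq
      simp only [Finset.mem_coe, Finset.mem_filter] at h1 h2
      have hr1 : Set.range ⇑ψ₁ ⊆ Set.range ⇑φ₀ :=
        range_sub H hiso (le_of_eq (h1.2.trans hφ₀.symm))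
      have hr2 : Set.range ⇑ψ₂ ⊆ Set.range ⇑φ₀ :=
        range_sub H hiso (le_of_eq (h2.2.trans hφ₀.symm))
      refine DFunLike.ext _ _ (fun a => ?_)
      have e1 : φ₀ (Function.invFun ⇑φ₀ (ψ₁ a)) = ψ₁ a := Function.invFun_eq (hr1 ⟨a, rfl⟩)
      have e2 : φ₀ (Function.invFun ⇑φ₀ (ψ₂ a)) = ψ₂ a := Function.invFun_eq (hr2 ⟨a, rfl⟩)
      have h3 := congrFun heq a
      simp only at h3
      rw [← e1, ← e2, h3]
    simpa [Fintype.card_fun] using hcard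
  have h2 := Finset.card_le_mul_card_image (f := phiMap H) s (v ^ v) hfib
  have h3 : (s.image (phiMap H)).card ≤ (copiesFinset H x₀).card := by
    apply Finset.card_le_card
    apply Finset.image_subset_image
    intro φ hφ
    simp only [hs, Finset.mem_filter, Finset.mem_univ, true_and] at hφ ⊢
    exact ⟨e0, hφ⟩
  calc (n+1-v)^(v-1) ≤ s.card := hcard_s
    _ ≤ v^v * (s.image (phiMap H)).card := h2
    _ ≤ v^v * (copiesFinset H x₀).card := Nat.mul_le_mul_left _ h3

lemma span_sub_range {L : Finset (Sym2 (Fin n))} {φ : Fin v ↪ Fin n}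
    (hx : ∃ a, φ a = x₀) (hL : L ⊆ phiMap H φ) : vertSpan L x₀ ⊆ Set.range ⇑φ := by
  intro x hx'
  simp only [vertSpan, Set.mem_setOf_eq] at hx'
  rcases hx' with rfl | ⟨e, heL, hxe⟩
  · obtain ⟨a, ha⟩ := hx; exact ⟨a, ha⟩
  · have hmem := hL heL
    simp only [phiMap, Finset.mem_image] at hmem
    obtain ⟨e', _, rfl⟩ := hmem
    rw [Sym2.mem_map] at hxe
    obtain ⟨y, _, hy⟩ := hxe
    exact ⟨y, hy⟩

lemma descFactorial_le_pow_self {k : ℕ} (hv : 1 ≤ v) : v.descFactorial k ≤ v ^ v := by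
  by_cases hk : k ≤ v
  · exact (Nat.descFactorial_le_pow v k).trans (Nat.pow_le_pow_right hv hk)
  · rw [Nat.descFactorial_eq_zero_iff_lt.mpr (by omega)]
    positivity

lemma copiesContaining_le (hv : 1 ≤ v) (L : Finset (Sym2 (Fin n))) :
    {U ∈ copyEdgeSets v n H x₀ | L ⊆ U}.ncard
      ≤ v ^ v * n ^ (v - (vertSpan L x₀).ncard) := by
  classical
  haveI : Nonempty (Fin v) := ⟨⟨0, by omega⟩⟩
  set S : Set (Fin n) := vertSpan L x₀ with hS
  set S' : Finset (Fin n) := S.toFinset with hS'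
  set T : Finset (Fin v ↪ Fin n) := Finset.univ.filter (fun φ => S ⊆ Set.range ⇑φ) with hT
  have hsub : {U ∈ copyEdgeSets v n H x₀ | L ⊆ U} ⊆ ↑(T.image (phiMap H)) := by
    rintro U ⟨⟨φ, hx, rfl⟩, hLU⟩
    refine Finset.mem_coe.mpr (Finset.mem_image.mpr ⟨φ, ?_, rfl⟩)
    simp only [hT, Finset.mem_filter, Finset.mem_univ, true_and]
    exact span_sub_range H x₀ hx hLU
  have h1 : {U ∈ copyEdgeSets v n H x₀ | L ⊆ U}.ncard ≤ (T.image (phiMap H)).card := by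
    rw [← Set.ncard_coe_finset]
    exact Set.ncard_le_ncard hsub (Finset.finite_toSet _)
  refine h1.trans ((Finset.card_image_le).trans ?_)
  have hTcard : T.card = Fintype.card {φ : Fin v ↪ Fin n // S ⊆ Set.range ⇑φ} :=
    (Fintype.card_subtype _).symm
  rw [hTcard]
  haveI : Nonempty (Fin n) := ⟨x₀⟩
  have hpre : ∀ (φ : {φ : Fin v ↪ Fin n // S ⊆ Set.range ⇑φ}) (s : ↥S'),
      φ.1 (Function.invFun ⇑φ.1 s.1) = s.1 :=
    fun φ s => Function.invFun_eq (φ.2 (Set.mem_toFinset.mp s.2))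
  let g : {φ : Fin v ↪ Fin n // S ⊆ Set.range ⇑φ} → (↥S' ↪ Fin v) := fun φ =>
    ⟨fun s => Function.invFun ⇑φ.1 s.1, by
      intro s t hst
      have := congrArg ⇑φ.1 hst
      rw [hpre φ s, hpre φ t] at this
      exact Subtype.ext this⟩
  let F : {φ : Fin v ↪ Fin n // S ⊆ Set.range ⇑φ} →
      (Σ g : (↥S' ↪ Fin v), {h : Fin v → Fin n // ∀ a ∈ Finset.univ.image ⇑g, h a = x₀}) :=
    fun φ => ⟨g φ, ⟨fun a => if a ∈ Finset.univ.image ⇑(g φ) then x₀ else φ.1 a,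
      fun a ha => if_pos ha⟩⟩
  have hFinj : Function.Injective F := by
    intro φ₁ φ₂ h
    have h1 : g φ₁ = g φ₂ := congrArg Sigma.fst h
    have h1' : ⇑(g φ₁) = ⇑(g φ₂) := congrArg DFunLike.coe h1
    have h2' : (F φ₁).2.1 = (F φ₂).2.1 := congrArg
      (fun z : (Σ g : (↥S' ↪ Fin v), {h : Fin v → Fin n // ∀ a ∈ Finset.univ.image ⇑g, h a = x₀})
        => z.2.1) h
    refine Subtype.ext (DFunLike.ext _ _ (fun a => ?_))
    by_cases ha : a ∈ Finset.univ.image ⇑(g φ₁)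
    · obtain ⟨s, _, hs⟩ := Finset.mem_image.mp ha
      have e1 : φ₁.1 a = s.1 := by rw [← hs]; exact hpre φ₁ s
      have e2 : φ₂.1 a = s.1 := by
        rw [← hs, h1']; exact hpre φ₂ s
      rw [e1, e2]
    · have ha2 : a ∉ Finset.univ.image ⇑(g φ₂) := by rwa [← h1']
      have e1 : (F φ₁).2.1 a = φ₁.1 a := if_neg ha
      have e2 : (F φ₂).2.1 a = φ₂.1 a := if_neg ha2
      rw [← e1, ← e2, h2']
  refine (Fintype.card_le_of_injective F hFinj).trans ?_
  rw [Fintype.card_sigma]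
  have hS'card : S'.card = S.ncard := (Set.ncard_eq_toFinset_card' S).symm
  have heach : ∀ gg : ↥S' ↪ Fin v,
      Fintype.card {h : Fin v → Fin n // ∀ a ∈ Finset.univ.image ⇑gg, h a = x₀}
        = n ^ (v - S.ncard) := by
    intro gg
    have := card_eqOn (Finset.univ.image ⇑gg) (fun _ => x₀)
    have himg : (Finset.univ.image ⇑gg).card = S.ncard := by
      rw [Finset.card_image_of_injective _ gg.injective, Finset.card_univ, Fintype.card_coe,
        hS'card]
    simp only [himg, Fintype.card_fin] at this
    convert this using 2
  calc (∑ gg : ↥S' ↪ Fin v,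
        Fintype.card {h : Fin v → Fin n // ∀ a ∈ Finset.univ.image ⇑gg, h a = x₀})
      = Fintype.card (↥S' ↪ Fin v) * n ^ (v - S.ncard) := by
        rw [Finset.sum_congr rfl (fun gg _ => heach gg), Finset.sum_const, Finset.card_univ,
          smul_eq_mul]
    _ ≤ v ^ v * n ^ (v - S.ncard) := by
        refine Nat.mul_le_mul_right _ ?_
        rw [Fintype.card_embedding_eq, Fintype.card_fin, Fintype.card_coe]
        exact descFactorial_le_pow_self hv

lemma span_facts (hv : 2 ≤ v) (hbal : StrictlyBalanced H)
    {L : Finset (Sym2 (Fin n))} (hL : L.Nonempty) (hLm : L.card < H.edgeFinset.card)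
    {φ : Fin v ↪ Fin n} (hx : ∃ a, φ a = x₀) (hsub : L ⊆ phiMap H φ) :
    2 ≤ (vertSpan L x₀).ncard ∧ (vertSpan L x₀).ncard ≤ v ∧
      L.card * (v - 1) < H.edgeFinset.card * ((vertSpan L x₀).ncard - 1) := by
  have hSr : vertSpan L x₀ ⊆ Set.range ⇑φ := span_sub_range H x₀ hx hsub
  set H' : H.Subgraph :=
    { verts := ⇑φ ⁻¹' (vertSpan L x₀)
      Adj := fun a b => H.Adj a b ∧ s(φ a, φ b) ∈ L
      adj_sub := fun h => h.1
      edge_vert := fun {a b} h => Or.inr ⟨s(φ a, φ b), h.2, Sym2.mem_mk_left _ _⟩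
      symm := ⟨fun a b h => ⟨h.1.symm, by rw [Sym2.eq_swap]; exact h.2⟩⟩ } with hH'
  have himg : Sym2.map ⇑φ '' H'.edgeSet = ↑L := by
    ext l
    constructor
    · rintro ⟨e, he, rfl⟩
      revert he
      induction e using Sym2.ind with
      | _ a b =>
      intro he
      rw [SimpleGraph.Subgraph.mem_edgeSet] at he
      rw [Sym2.map_pair_eq]
      exact Finset.mem_coe.mpr he.2
    · intro hl
      have hmem := hsub (Finset.mem_coe.mp hl)
      simp only [phiMap, Finset.mem_image] at hmem
      obtain ⟨e, he, rfl⟩ := hmem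
      refine ⟨e, ?_, rfl⟩
      revert he hl
      induction e using Sym2.ind with
      | _ a b =>
      intro he hl
      rw [SimpleGraph.mem_edgeFinset, SimpleGraph.mem_edgeSet] at he
      rw [SimpleGraph.Subgraph.mem_edgeSet]
      rw [Sym2.map_pair_eq] at hl
      exact ⟨he, Finset.mem_coe.mp hl⟩
  have hedge : H'.edgeSet.ncard = L.card := by
    rw [← Set.ncard_coe_finset, ← himg,
      Set.ncard_image_of_injective _ (Sym2.map.injective φ.injective)]
  have hverts : H'.verts.ncard = (vertSpan L x₀).ncard := by
    have hverts_img : ⇑φ '' H'.verts = vertSpan L x₀ :=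
      Set.image_preimage_eq_of_subset hSr
    rw [← hverts_img, Set.ncard_image_of_injective _ φ.injective]
  obtain ⟨l, hl⟩ := hL
  have hlp := hsub hl
  simp only [phiMap, Finset.mem_image] at hlp
  obtain ⟨e, he, hle⟩ := hlp
  have h2span : 2 ≤ (vertSpan L x₀).ncard := by
    revert he hle
    induction e using Sym2.ind with
    | _ a b =>
    intro he hle
    rw [SimpleGraph.mem_edgeFinset, SimpleGraph.mem_edgeSet] at he
    rw [Sym2.map_pair_eq] at hle
    have hma : φ a ∈ vertSpan L x₀ :=
      Or.inr ⟨l, hl, by rw [← hle]; exact Sym2.mem_mk_left _ _⟩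
    have hmb : φ b ∈ vertSpan L x₀ :=
      Or.inr ⟨l, hl, by rw [← hle]; exact Sym2.mem_mk_right _ _⟩
    have hpair : ({φ a, φ b} : Set (Fin n)) ⊆ vertSpan L x₀ := by
      intro x hx'
      rcases hx' with rfl | rfl
      · exact hma
      · exact hmb
    have hcard2 : ({φ a, φ b} : Set (Fin n)).ncard = 2 :=
      Set.ncard_pair (fun hh => he.ne (φ.injective hh))
    rw [← hcard2]
    exact Set.ncard_le_ncard hpair (Set.toFinite _)
  have hle_v : (vertSpan L x₀).ncard ≤ v := by
    rw [← hverts]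
    have := Set.ncard_le_ncard (Set.subset_univ H'.verts) Set.finite_univ
    simpa [Set.ncard_univ] using this
  have hne : H' ≠ ⊤ := by
    intro ht
    have he' : H'.edgeSet = H.edgeSet := by rw [ht, SimpleGraph.Subgraph.edgeSet_top]
    rw [he', edge_ncard_eq] at hedge
    omega
  have hlt := hbal H' hne (by rw [hverts]; exact h2span)
  unfold subgraphDensity graphDensity at hlt
  rw [hedge, hverts, edge_ncard_eq, Fintype.card_fin] at hlt
  set s' := (vertSpan L x₀).ncard with hs'
  have hd1 : (0:ℝ) < (s':ℝ) - 1 := by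
    have : (2:ℝ) ≤ (s':ℝ) := by exact_mod_cast h2span
    linarith
  have hd2 : (0:ℝ) < (v:ℝ) - 1 := by
    have : (2:ℝ) ≤ (v:ℝ) := by exact_mod_cast hv
    linarith
  have hmul := (div_lt_div_iff₀ hd1 hd2).mp hlt
  refine ⟨h2span, hle_v, ?_⟩
  have hcast : ((L.card * (v-1) : ℕ) : ℝ) < ((H.edgeFinset.card * (s' - 1) : ℕ) : ℝ) := by
    push_cast [Nat.cast_sub (by omega : 1 ≤ v), Nat.cast_sub (by omega : 1 ≤ s')]
    nlinarith [hmul]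
  exact_mod_cast hcast

end Counting
theorem stmt16 {v : ℕ} (hv : 2 ≤ v) (H : SimpleGraph (Fin v)) [DecidableRel H.Adj]
    (hbal : StrictlyBalanced H) (m : ℕ) (hm : m = H.edgeFinset.card) (hm1 : 1 ≤ m) :
    ∃ c₁ c₂ c₃ c₄ : ℝ, 0 < c₁ ∧ 0 < c₂ ∧ 0 < c₃ ∧ 0 < c₄ ∧
      ∀ᶠ n : ℕ in Filter.atTop, ∀ x₀ : Fin n, ∀ p : ℝ, 0 < p → p ≤ 1 →
        (c₁ * (n : ℝ) ^ (v - 1) * p ^ m ≤ Ef v n H x₀ m p ∧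
          Ef v n H x₀ m p ≤ c₂ * (n : ℝ) ^ (v - 1) * p ^ m) ∧
        ∀ L : Finset (Sym2 (Fin n)), L.Nonempty → L.card < m →
          (∃ U ∈ copyEdgeSets v n H x₀, L ⊆ U) →
          c₃ * (n : ℝ) ^ ((vertSpan L x₀).ncard - 1) * p ^ L.card *
              ELf v n H x₀ m p L ≤ Ef v n H x₀ m p ∧
            ((n : ℝ) ^ (-(((v : ℝ) - 1) / (m : ℝ))) ≤ p →
              (n : ℝ) ^ c₄ * ELf v n H x₀ m p L ≤ Ef v n H x₀ m p) := by
  have hiso : ∀ a : Fin v, ∃ b, H.Adj a b :=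
    no_isolated hv H hbal (hm ▸ hm1)
  have hv0 : (0:ℝ) < (v:ℝ) := by exact_mod_cast (by omega : 0 < v)
  set c₁ : ℝ := 1 / ((2:ℝ)^(v-1) * (v:ℝ)^v) with hc₁
  have hc₁pos : 0 < c₁ := by rw [hc₁]; positivity
  set c₃ : ℝ := c₁ / (v:ℝ)^v with hc₃
  have hc₃pos : 0 < c₃ := by rw [hc₃]; positivity
  set P : Finset (ℕ × ℕ) := (Finset.range (m+1) ×ˢ Finset.range (v+1)).filter
    (fun q => 2 ≤ q.2 ∧ q.1 * (v-1) < m * (q.2 - 1)) with hP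
  set gap : ℕ × ℕ → ℝ := fun q => ((q.2 : ℝ) - 1) - ((v:ℝ) - 1) * (q.1:ℝ) / (m:ℝ) with hgap
  have hgap_pos : ∀ q ∈ P, 0 < gap q := by
    intro q hq
    rw [hP, Finset.mem_filter] at hq
    obtain ⟨hmem, hq2, hq3⟩ := hq
    have hm0 : (0:ℝ) < (m:ℝ) := by exact_mod_cast hm1
    have hcast : ((q.1 * (v-1) : ℕ):ℝ) < ((m * (q.2 - 1) : ℕ):ℝ) := by exact_mod_cast hq3
    rw [hgap]
    have h1 : ((q.1 * (v-1):ℕ):ℝ) = (q.1:ℝ) * ((v:ℝ)-1) := by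
      push_cast [Nat.cast_sub (by omega : 1 ≤ v)]; ring
    have h2 : ((m * (q.2-1):ℕ):ℝ) = (m:ℝ) * ((q.2:ℝ)-1) := by
      push_cast [Nat.cast_sub (by omega : 1 ≤ q.2)]; ring
    rw [h1, h2] at hcast
    simp only
    rw [sub_pos, div_lt_iff₀ hm0]
    linarith
  set ε : ℝ := if h : P.Nonempty then P.inf' h gap else 1 with hε
  have hεpos : 0 < ε := by
    rw [hε]
    split_ifs with h
    · obtain ⟨q, hq, hqe⟩ := Finset.exists_mem_eq_inf' h gap
      rw [hqe]; exact hgap_pos q hq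
    · exact one_pos
  have hεle : ∀ q ∈ P, ε ≤ gap q := by
    intro q hq
    rw [hε, dif_pos ⟨q, hq⟩]
    exact Finset.inf'_le gap hq
  refine ⟨c₁, (v:ℝ), c₃, ε/2, hc₁pos, hv0, hc₃pos, by positivity, ?_⟩
  have hev2 : ∀ᶠ (n:ℕ) in Filter.atTop, (1:ℝ) ≤ c₃ * (n:ℝ)^(ε/2) := by
    have ht : Filter.Tendsto (fun n : ℕ => c₃ * (n:ℝ)^(ε/2)) Filter.atTop Filter.atTop := by
      apply Filter.Tendsto.const_mul_atTop hc₃pos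
      exact (tendsto_rpow_atTop (by positivity)).comp tendsto_natCast_atTop_atTop
    exact ht.eventually_ge_atTop 1
  filter_upwards [Filter.eventually_ge_atTop (2*v), hev2] with n hn hn2
  intro x₀ p hp hp1
  have hnv : v ≤ n := by omega
  have hnR : (1:ℝ) ≤ (n:ℝ) := by exact_mod_cast (by omega : 1 ≤ n)
  have hnpos : (0:ℝ) < (n:ℝ) := by linarith
  have hppow : (0:ℝ) < p ^ m := pow_pos hp m
  have hNup : ((copyEdgeSets v n H x₀).ncard : ℝ) ≤ (v:ℝ) * (n:ℝ)^(v-1) := by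
    rw [ncard_copies]
    calc ((copiesFinset H x₀).card : ℝ) ≤ ((v * n^(v-1) : ℕ) : ℝ) := by
          exact_mod_cast copies_card_le H x₀
      _ = (v:ℝ) * (n:ℝ)^(v-1) := by push_cast; ring
  have hNlow : c₁ * (n:ℝ)^(v-1) ≤ ((copyEdgeSets v n H x₀).ncard : ℝ) := by
    rw [ncard_copies]
    have h1 := copies_card_ge H x₀ hv hnv hiso
    have h2 : ((n:ℝ)/2)^(v-1) ≤ (((n+1-v : ℕ)):ℝ)^(v-1) := by
      apply pow_le_pow_left₀ (by positivity)
      have hcv : ((n+1-v : ℕ):ℝ) = (n:ℝ) + 1 - (v:ℝ) := by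
        push_cast [Nat.cast_sub (by omega : v ≤ n + 1)]
        ring
      rw [hcv]
      have hcast : 2*(v:ℝ) ≤ (n:ℝ) := by exact_mod_cast hn
      linarith
    have h3 : (((n+1-v:ℕ)):ℝ)^(v-1) ≤ (v:ℝ)^v * ((copiesFinset H x₀).card : ℝ) := by
      exact_mod_cast h1
    have h4 : c₁ * (n:ℝ)^(v-1) = ((n:ℝ)/2)^(v-1) / (v:ℝ)^v := by
      rw [hc₁, div_pow]
      field_simp
    rw [h4, div_le_iff₀ (by positivity : (0:ℝ) < (v:ℝ)^v)]
    calc ((n:ℝ)/2)^(v-1) ≤ (v:ℝ)^v * ((copiesFinset H x₀).card : ℝ) := h2.trans h3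
      _ = ((copiesFinset H x₀).card:ℝ) * (v:ℝ)^v := by ring
  refine ⟨⟨?_, ?_⟩, ?_⟩
  · exact mul_le_mul_of_nonneg_right hNlow hppow.le
  · exact mul_le_mul_of_nonneg_right hNup hppow.le
  · intro L hLne hLcard hex
    obtain ⟨U, hU, hLU⟩ := hex
    obtain ⟨φ, hxφ, rfl⟩ := hU
    have hsubφ : L ⊆ phiMap H φ := hLU
    obtain ⟨h2span, hspanv, hkey⟩ :=
      span_facts H x₀ hv hbal hLne (hm ▸ hLcard) hxφ hsubφ
    rw [← hm] at hkey
    set v' := (vertSpan L x₀).ncard with hv'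
    set NL : ℝ := ({U ∈ copyEdgeSets v n H x₀ | L ⊆ U}.ncard : ℝ) with hNLd
    have hNLnn : (0:ℝ) ≤ NL := by rw [hNLd]; positivity
    have hNL : NL ≤ (v:ℝ)^v * (n:ℝ)^(v - v') := by
      rw [hNLd]
      calc (({U ∈ copyEdgeSets v n H x₀ | L ⊆ U}.ncard : ℕ) : ℝ)
          ≤ ((v^v * n^(v - v') : ℕ) : ℝ) := by
            exact_mod_cast copiesContaining_le H x₀ (by omega) L
        _ = (v:ℝ)^v * (n:ℝ)^(v-v') := by push_cast; ring
    have hmain : c₃ * (n:ℝ)^(v'-1) * NL ≤ ((copyEdgeSets v n H x₀).ncard : ℝ) := by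
      have step : c₃ * (n:ℝ)^(v'-1) * NL
          ≤ c₃ * (n:ℝ)^(v'-1) * ((v:ℝ)^v * (n:ℝ)^(v-v')) :=
        mul_le_mul_of_nonneg_left hNL (by positivity)
      refine step.trans ?_
      have hpowadd : (n:ℝ)^(v'-1) * (n:ℝ)^(v-v') = (n:ℝ)^(v-1) := by
        rw [← pow_add]; congr 1; omega
      have heq : c₃ * (n:ℝ)^(v'-1) * ((v:ℝ)^v * (n:ℝ)^(v-v'))
          = c₁ * ((n:ℝ)^(v'-1) * (n:ℝ)^(v-v')) := by
        rw [hc₃]; field_simp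
      rw [heq, hpowadd]
      exact hNlow
    have hfirst : c₃ * (n:ℝ)^(v'-1) * p^(L.card) * ELf v n H x₀ m p L
        ≤ Ef v n H x₀ m p := by
      show c₃ * (n:ℝ)^(v'-1) * p^(L.card) * (NL * p ^ (m - L.card))
        ≤ ((copyEdgeSets v n H x₀).ncard : ℝ) * p ^ m
      have hpp : p ^ L.card * p ^ (m - L.card) = p ^ m := by
        rw [← pow_add]; congr 1; omega
      calc c₃ * (n:ℝ)^(v'-1) * p^(L.card) * (NL * p^(m-L.card))
          = (c₃ * (n:ℝ)^(v'-1) * NL) * (p^(L.card) * p^(m - L.card)) := by ring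
        _ = (c₃ * (n:ℝ)^(v'-1) * NL) * p^m := by rw [hpp]
        _ ≤ ((copyEdgeSets v n H x₀).ncard : ℝ) * p^m :=
            mul_le_mul_of_nonneg_right hmain hppow.le
    refine ⟨hfirst, fun hpge => ?_⟩
    have hqP : (L.card, v') ∈ P := by
      rw [hP, Finset.mem_filter, Finset.mem_product, Finset.mem_range, Finset.mem_range]
      exact ⟨⟨by omega, by omega⟩, h2span, hkey⟩
    have hgaple := hεle _ hqP
    have hELfnn : 0 ≤ ELf v n H x₀ m p L := by
      show 0 ≤ NL * p ^ (m - L.card)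
      exact mul_nonneg hNLnn (pow_nonneg hp.le _)
    have hchain : (n:ℝ)^(ε/2) ≤ c₃ * (n:ℝ)^(v'-1) * p^(L.card) := by
      have hb0 : (0:ℝ) ≤ (n:ℝ) ^ (-(((v:ℝ)-1)/(m:ℝ))) := Real.rpow_nonneg hnpos.le _
      have hp1' : ((n:ℝ) ^ (-(((v:ℝ)-1)/(m:ℝ))))^(L.card) ≤ p ^ (L.card) :=
        pow_le_pow_left₀ hb0 hpge _
      have hrw : ((n:ℝ) ^ (-(((v:ℝ)-1)/(m:ℝ))))^(L.card)
          = (n:ℝ) ^ ((-(((v:ℝ)-1)/(m:ℝ))) * (L.card:ℝ)) := by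
        rw [← Real.rpow_natCast ((n:ℝ) ^ (-(((v:ℝ)-1)/(m:ℝ)))) L.card,
          ← Real.rpow_mul hnpos.le]
      rw [hrw] at hp1'
      have hrw2 : (n:ℝ)^(v'-1) = (n:ℝ) ^ (((v'-1:ℕ):ℝ)) := (Real.rpow_natCast _ _).symm
      have hexp : ((v'-1:ℕ):ℝ) + (-(((v:ℝ)-1)/(m:ℝ))) * (L.card:ℝ) = gap (L.card, v') := by
        rw [hgap]
        push_cast [Nat.cast_sub (by omega : 1 ≤ v')]
        ring
      calc (n:ℝ)^(ε/2) = 1 * (n:ℝ)^(ε/2) := (one_mul _).symm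
        _ ≤ (c₃ * (n:ℝ)^(ε/2)) * (n:ℝ)^(ε/2) :=
            mul_le_mul_of_nonneg_right hn2 (Real.rpow_nonneg hnpos.le _)
        _ = c₃ * (n:ℝ)^ε := by
            rw [mul_assoc, ← Real.rpow_add hnpos, add_halves]
        _ ≤ c₃ * (n:ℝ)^(gap (L.card, v')) :=
            mul_le_mul_of_nonneg_left
              (Real.rpow_le_rpow_of_exponent_le hnR hgaple) hc₃pos.le
        _ = c₃ * ((n:ℝ)^(((v'-1:ℕ):ℝ)) * (n:ℝ)^((-(((v:ℝ)-1)/(m:ℝ))) * (L.card:ℝ))) := by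
            rw [← Real.rpow_add hnpos, hexp]
        _ ≤ c₃ * ((n:ℝ)^(((v'-1:ℕ):ℝ)) * p^(L.card)) := by
            apply mul_le_mul_of_nonneg_left _ hc₃pos.le
            exact mul_le_mul_of_nonneg_left hp1' (Real.rpow_nonneg hnpos.le _)
        _ = c₃ * (n:ℝ)^(v'-1) * p^(L.card) := by rw [← hrw2]; ring
    calc (n:ℝ)^(ε/2) * ELf v n H x₀ m p L
        ≤ (c₃ * (n:ℝ)^(v'-1) * p^(L.card)) * ELf v n H x₀ m p L :=
          mul_le_mul_of_nonneg_right hchain hELfnn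
      _ ≤ Ef v n H x₀ m p := hfirst
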